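/- For every n ≥ 2, the (n+3)-ary Boolean relation R = { (x₁,…,xₙ,x,c₀,c₁) ∈ Bool^{n+3} | ¬(x₁ ∧ ⋯ ∧ xₙ) ∧ (x → x₁ ∧ ⋯ ∧ xₙ) ∧ (c₀ = 0) ∧ (c₁ = 1) } is a weak base of the co-clone it generates (this co-clone is IS^n_{10} in Post's lattice): for every finite set Δ of Boolean relations with Pol(Δ) = Pol({R}) one has pPol(Δ) ⊆ pPol({R}). -/
import Mathlib


/-- A Boolean relation of arity `k`: a set of `k`-tuples over `Bool`. -/
abbrev BRel (k : ℕ) := Set (Fin k → Bool)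

/-- A total `m`-ary Boolean operation `f` preserves a `k`-ary relation `R`. -/
def Preserves {m k : ℕ} (f : (Fin m → Bool) → Bool) (R : BRel k) : Prop :=
  ∀ ts : Fin m → Fin k → Bool, (∀ j, ts j ∈ R) → (fun i => f (fun j => ts j i)) ∈ R

/-- A partial `m`-ary Boolean operation (modelled with `Option Bool`; `none` =
undefined) preserves a `k`-ary relation `R`. -/
def PPreserves {m k : ℕ} (f : (Fin m → Bool) → Option Bool) (R : BRel k) : Prop :=
  ∀ ts : Fin m → Fin k → Bool, (∀ j, ts j ∈ R) →
    ∀ u : Fin k → Bool, (∀ i, f (fun j => ts j i) = some (u i)) → u ∈ R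

/-- The set of all (finitary, total) polymorphisms of a set of relations. -/
def Pol (Γ : Set (Σ k, BRel k)) : Set (Σ m, (Fin m → Bool) → Bool) :=
  { f | ∀ R ∈ Γ, Preserves f.2 R.2 }

/-- The set of all partial polymorphisms of a set of relations. -/
def pPol (Γ : Set (Σ k, BRel k)) : Set (Σ m, (Fin m → Bool) → Option Bool) :=
  { f | ∀ R ∈ Γ, PPreserves f.2 R.2 }

/-- `R` is a weak base of the co-clone it generates: every finite `Δ` with the
same polymorphisms as `R` satisfies `pPol Δ ⊆ pPol {R}`. -/
def IsWeakBase {k : ℕ} (R : BRel k) : Prop :=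
  ∀ Δ : Set (Σ k, BRel k), Δ.Finite →
    Pol Δ = Pol {⟨k, R⟩} → pPol Δ ⊆ pPol {⟨k, R⟩}

theorem stmt8 (n : ℕ) (hn : 2 ≤ n) :
    IsWeakBase { t : Fin (n + 3) → Bool |
      ¬ (∀ i : Fin n, t (Fin.castLE (by omega) i) = true) ∧
      (t ⟨n, by omega⟩ = true → ∀ i : Fin n, t (Fin.castLE (by omega) i) = true) ∧
      t ⟨n + 1, by omega⟩ = false ∧ t ⟨n + 2, by omega⟩ = true } := by
  classical
  set R : BRel (n + 3) := { t : Fin (n + 3) → Bool |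
      ¬ (∀ i : Fin n, t (Fin.castLE (by omega) i) = true) ∧
      (t ⟨n, by omega⟩ = true → ∀ i : Fin n, t (Fin.castLE (by omega) i) = true) ∧
      t ⟨n + 1, by omega⟩ = false ∧ t ⟨n + 2, by omega⟩ = true } with hR
  -- a tuple in R has `false` at coordinate n
  have hxf : ∀ t : Fin (n + 3) → Bool, t ∈ R → t ⟨n, by omega⟩ = false := by
    intro t ht
    obtain ⟨h1, h2, -, -⟩ := ht
    cases h : t ⟨n, by omega⟩ with
    | false => rfl
    | true => exact absurd (h2 h) h1
  intro Δ _hfin hPol g hg S hS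
  rw [Set.mem_singleton_iff] at hS
  subst hS
  intro ts hts u hu
  -- the columns of the matrix of the tuples `ts`
  set col : Fin (n + 3) → Fin g.1 → Bool := fun i m => ts m i with hcol
  -- the retraction onto the set of columns
  set e : (Fin g.1 → Bool) → (Fin g.1 → Bool) :=
    fun x => if (∃ i, x = col i) then x else (fun _ => false) with he
  -- the all-zero vector is a column
  have hzero : (fun _ => false : Fin g.1 → Bool) = col ⟨n, by omega⟩ := by
    funext m
    exact (hxf (ts m) (hts m)).symm
  -- the all-one vector is a column
  have hone : (fun _ => true : Fin g.1 → Bool) = col ⟨n + 2, by omega⟩ := by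
    funext m
    exact ((hts m).2.2.2).symm
  -- every value of e is a column
  have heD : ∀ x, ∃ i, e x = col i := by
    intro x
    by_cases h : ∃ i, x = col i
    · obtain ⟨i, hi⟩ := h
      exact ⟨i, by simp only [he, if_pos (⟨i, hi⟩ : ∃ i, x = col i)]; exact hi⟩
    · exact ⟨⟨n, by omega⟩, by simp only [he, if_neg h]; exact hzero⟩
  -- e fixes columns
  have hfix : ∀ i, e (col i) = col i := by
    intro i
    simp only [he, if_pos (⟨i, rfl⟩ : ∃ j, col i = col j)]
  -- componentwise monotone-type property : e x j = true → x j = true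
  have hA : ∀ x j, e x j = true → x j = true := by
    intro x j h
    by_cases hx : ∃ i, x = col i
    · simpa only [he, if_pos hx] using h
    · simp only [he, if_neg hx] at h
      exact absurd h (by simp)
  -- e of the all-one vector is all-one
  have hones : e (fun _ => true) = (fun _ => true) := by
    rw [hone]; exact hfix _
  -- each component of e is a polymorphism of Δ
  have hcomp : ∀ j : Fin g.1,
      (⟨g.1, fun x => e x j⟩ : Σ m, (Fin m → Bool) → Bool) ∈ Pol Δ := by
    intro j
    rw [hPol]
    intro S hS
    rw [Set.mem_singleton_iff] at hS
    subst hS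
    intro ss hss
    have hvaln : e (fun m => ss m (⟨n, by omega⟩ : Fin (n + 3))) j = false := by
      have h0 : (fun m => ss m (⟨n, by omega⟩ : Fin (n + 3)))
          = (fun _ => false : Fin g.1 → Bool) := by
        funext m; exact hxf (ss m) (hss m)
      cases hv : e (fun m => ss m (⟨n, by omega⟩ : Fin (n + 3))) j with
      | false => rfl
      | true =>
        have h2 : ss j (⟨n, by omega⟩ : Fin (n + 3)) = true := hA _ _ hv
        have h3 : ss j (⟨n, by omega⟩ : Fin (n + 3)) = false := congrFun h0 j
        rw [h2] at h3
        cases h3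
    refine ⟨?_, ?_, ?_, ?_⟩
    · intro hall
      apply (hss j).1
      intro i
      exact hA _ _ (hall i)
    · intro h
      have h' : e (fun m => ss m (⟨n, by omega⟩ : Fin (n + 3))) j = true := h
      rw [hvaln] at h'
      cases h'
    · -- coordinate n+1 : value false
      show e (fun m => ss m (⟨n + 1, by omega⟩ : Fin (n + 3))) j = false
      cases hv : e (fun m => ss m (⟨n + 1, by omega⟩ : Fin (n + 3))) j with
      | false => rfl
      | true =>
        have h2 : ss j (⟨n + 1, by omega⟩ : Fin (n + 3)) = true := hA _ _ hv
        have h3 : ss j (⟨n + 1, by omega⟩ : Fin (n + 3)) = false := (hss j).2.2.1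
        rw [h2] at h3
        cases h3
    · -- coordinate n+2 : value true
      have h1 : (fun m => ss m (⟨n + 2, by omega⟩ : Fin (n + 3)))
          = (fun _ => true : Fin g.1 → Bool) := by
        funext m; exact (hss m).2.2.2
      show e (fun m => ss m (⟨n + 2, by omega⟩ : Fin (n + 3))) j = true
      rw [h1, hones]
  -- the total function f := getD ∘ g ∘ e
  set f : (Fin g.1 → Bool) → Bool := fun x => (g.2 (e x)).getD false with hf
  -- g is defined (with value agreeing with f/u) on all columns
  have hgval : ∀ x, ∀ i, e x = col i → g.2 (e x) = some (f x) := by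
    intro x i hi
    have h1 : g.2 (col i) = some (u i) := hu i
    rw [hi, h1, hf]
    simp [hi, h1]
  -- f is a polymorphism of Δ
  have hfPol : (⟨g.1, f⟩ : Σ m, (Fin m → Bool) → Bool) ∈ Pol Δ := by
    intro Q hQ vs hvs
    have hws : ∀ j, (fun ℓ => e (fun m => vs m ℓ) j) ∈ Q.2 := fun j => hcomp j Q hQ vs hvs
    refine hg Q hQ (fun j ℓ => e (fun m => vs m ℓ) j) hws
      (fun ℓ => f (fun m => vs m ℓ)) ?_
    intro ℓ
    obtain ⟨i, hi⟩ := heD (fun m => vs m ℓ)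
    exact hgval (fun m => vs m ℓ) i hi
  -- hence f is a polymorphism of {R}
  rw [hPol] at hfPol
  have hfR := hfPol ⟨n + 3, R⟩ rfl ts hts
  have hueq : u = fun i => f (fun j => ts j i) := by
    funext i
    have h1 : g.2 (e (col i)) = some (f (col i)) := hgval (col i) i (hfix i)
    rw [hfix i] at h1
    have h2 : g.2 (col i) = some (u i) := hu i
    rw [h2] at h1
    exact (Option.some_injective _ h1)
  rw [hueq]
  exact hfR
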